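/- arXiv:1810.05593 — 2 statements merged into one kernel-verified Lean document; each statement's English description precedes it below -/
import Mathlib

section
/- (k-element separation without correlation assumption) Under the same i.i.d. product-distribution assumptions, pick δ > 0 and 0 < ε < 1 with 1 - ε - δ(k-1) > 0, set x̄ = (1/k) Σ_{i=1}^k x_{M+i} and h(x) = ⟨x/R_0, x̄/R_0⟩ - (1 - ε - δ(k-1))/k. Then P(h(x_j) ≥ 0 for all j in the k-element set and h(x_i) < 0 for all i in the M-element set) ≥ 1 - k exp(-2 R_0^4 ε^2 / n) - (k(k-1)/2) exp(-R_0^4 δ^2 / (2n)) - M exp(-R_0^4 (1-ε-δ(k-1))^2 / (2 k^2 n)). -/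
open MeasureTheory ProbabilityTheory Real

/-- Key analytic inequality for Hoeffding's lemma. -/
lemma hoeffding_aux {p : ℝ} (hp0 : 0 ≤ p) (hp1 : p ≤ 1) (h : ℝ) :
    (1 - p) * Real.exp (-p * h) + p * Real.exp ((1 - p) * h) ≤ Real.exp (h ^ 2 / 8) := by
  rcases eq_or_lt_of_le hp0 with hp0' | hp0'
  · simp [← hp0']
    positivity
  rcases eq_or_lt_of_le hp1 with hp1' | hp1'
  · simp [hp1']
    positivity
  -- 0 < p < 1
  set D : ℝ → ℝ := fun h => (1 - p) + p * Real.exp h with hD_def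
  clear_value D
  have hDpos : ∀ h, 0 < D h := fun h => by
    have := Real.exp_pos h; simp only [hD_def]; nlinarith
  set φ : ℝ → ℝ := fun h => Real.log (D h) - p * h with hφ_def
  clear_value φ
  set ψ : ℝ → ℝ := fun h => p * Real.exp h / D h - p with hψ_def
  clear_value ψ
  have hD : ∀ h, HasDerivAt D (p * Real.exp h) h := fun h => by
    rw [hD_def]
    simpa using ((Real.hasDerivAt_exp h).const_mul p).const_add (1 - p)
  have hφ : ∀ h, HasDerivAt φ (ψ h) h := fun h => by
    have h1 : HasDerivAt (fun h => Real.log (D h)) (p * Real.exp h / D h) h :=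
      (hD h).log (hDpos h).ne'
    have h2 : HasDerivAt (fun y => Real.log (D y) - p * y) (p * Real.exp h / D h - p * 1) h :=
      h1.sub ((hasDerivAt_id h).const_mul p)
    rw [hφ_def, hψ_def]
    simpa using h2
  have hψ : ∀ h, HasDerivAt ψ (p * Real.exp h * (1 - p) / (D h) ^ 2) h := fun h => by
    have h1 : HasDerivAt (fun h => p * Real.exp h) (p * Real.exp h) h :=
      (Real.hasDerivAt_exp h).const_mul p
    have h2 := (h1.div (hD h) (hDpos h).ne')
    have h3 : (p * Real.exp h * D h - p * Real.exp h * (p * Real.exp h)) / D h ^ 2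
        = p * Real.exp h * (1 - p) / (D h) ^ 2 := by
      simp only [hD_def]; ring
    rw [h3] at h2
    simpa [hψ_def] using h2.sub_const p
  have hψd_bound : ∀ h, |p * Real.exp h * (1 - p) / (D h) ^ 2| ≤ 1 / 4 := fun h => by
    have he := Real.exp_pos h
    have hnum : 0 ≤ p * Real.exp h * (1 - p) := by
      nlinarith [mul_pos (mul_pos hp0' he) (by linarith : (0:ℝ) < 1 - p)]
    have hsq : 4 * (p * Real.exp h * (1 - p)) ≤ (D h) ^ 2 := by
      have h4 : ((1 - p) - p * Real.exp h) ^ 2 ≥ 0 := sq_nonneg _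
      simp only [hD_def]; nlinarith
    rw [abs_of_nonneg (div_nonneg hnum (sq_nonneg _))]
    rw [div_le_iff₀ (pow_pos (hDpos h) 2)]
    nlinarith [hsq, hnum]
  have hψ0 : ψ 0 = 0 := by simp [hψ_def, hD_def]
  have hψle : ∀ h, |ψ h| ≤ |h| / 4 := fun h => by
    have := Convex.norm_image_sub_le_of_norm_hasDerivWithin_le
      (f := ψ) (f' := fun h => p * Real.exp h * (1 - p) / (D h) ^ 2) (C := 1/4)
      (fun x _ => (hψ x).hasDerivWithinAt) (fun x _ => by
        rw [Real.norm_eq_abs]; exact hψd_bound x) convex_univ (Set.mem_univ 0)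
      (Set.mem_univ h)
    simp only [Real.norm_eq_abs, hψ0, sub_zero] at this
    linarith [this]
  -- g := h^2/8 - φ h ≥ 0
  set g : ℝ → ℝ := fun h => h ^ 2 / 8 - φ h with hg_def
  clear_value g
  have hg : ∀ h, HasDerivAt g (h / 4 - ψ h) h := fun h => by
    have h1 : HasDerivAt (fun h : ℝ => h ^ 2 / 8) (h / 4) h := by
      have := (hasDerivAt_pow 2 h).div_const 8
      simpa using this.congr_deriv (by push_cast; ring)
    have h2 : HasDerivAt (fun y => y ^ 2 / 8 - φ y) (h / 4 - ψ h) h := h1.sub (hφ h)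
    rw [hg_def]
    exact h2
  have hg0 : g 0 = 0 := by simp [hg_def, hφ_def, hD_def]
  have hgnonneg : ∀ h, 0 ≤ g h := by
    intro h
    rcases le_or_gt 0 h with hh | hh
    · have mono : MonotoneOn g (Set.Ici (0:ℝ)) := by
        refine monotoneOn_of_deriv_nonneg (convex_Ici 0)
          (fun x _ => (hg x).continuousAt.continuousWithinAt)
          (fun x _ => (hg x).differentiableAt.differentiableWithinAt) (fun x hx => ?_)
        rw [(hg x).deriv]
        have hx' : 0 < x := by simpa [interior_Ici] using hx
        have h5 := (abs_le.mp (hψle x)).2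
        rw [abs_of_pos hx'] at h5
        linarith
      have := mono Set.self_mem_Ici (Set.mem_Ici.mpr hh) hh
      rwa [hg0] at this
    · have anti : AntitoneOn g (Set.Iic (0:ℝ)) := by
        refine antitoneOn_of_deriv_nonpos (convex_Iic 0)
          (fun x _ => (hg x).continuousAt.continuousWithinAt)
          (fun x _ => (hg x).differentiableAt.differentiableWithinAt) (fun x hx => ?_)
        rw [(hg x).deriv]
        have hx' : x < 0 := by simpa [interior_Iic] using hx
        have h5 := (abs_le.mp (hψle x)).1
        rw [abs_of_neg hx'] at h5
        linarith
      have := anti (Set.mem_Iic.mpr hh.le) Set.self_mem_Iic hh.le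
      rwa [hg0] at this
  have key := hgnonneg h
  have hφle : φ h ≤ h ^ 2 / 8 := by simp only [hg_def] at key; linarith
  have hexp : Real.exp (φ h) ≤ Real.exp (h ^ 2 / 8) := Real.exp_le_exp.mpr hφle
  have hval : Real.exp (φ h) = (1 - p) * Real.exp (-p * h) + p * Real.exp ((1 - p) * h) := by
    rw [hφ_def]
    simp only
    rw [sub_eq_add_neg, Real.exp_add, Real.exp_log (hDpos h), hD_def]
    simp only
    rw [add_mul, mul_assoc, ← Real.exp_add]
    ring_nf
  rwa [hval] at hexp

/-- Hoeffding's lemma. -/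
lemma hoeffding_mgf {Ω : Type*} [MeasurableSpace Ω] (P : Measure Ω) [IsProbabilityMeasure P]
    {X : Ω → ℝ} (hX : Measurable X) {a b : ℝ} (hab : ∀ ω, X ω ∈ Set.Icc a b)
    (hmean : ∫ ω, X ω ∂P = 0) (t : ℝ) :
    mgf X P t ≤ Real.exp (t ^ 2 * (b - a) ^ 2 / 8) := by
  have hne : Nonempty Ω := by
    by_contra hemp
    rw [not_nonempty_iff] at hemp
    have h1 : P Set.univ = 1 := measure_univ
    rw [Set.univ_eq_empty_iff.mpr hemp] at h1
    simp at h1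
  -- integrability of X
  set C := max |a| |b| with hC_def
  have habs : ∀ ω, |X ω| ≤ C := fun ω => by
    rcases hab ω with ⟨h1, h2⟩
    rw [abs_le]
    constructor
    · calc -C ≤ -|a| := by simp [hC_def]
        _ ≤ a := neg_abs_le a
        _ ≤ X ω := h1
    · calc X ω ≤ b := h2
        _ ≤ |b| := le_abs_self b
        _ ≤ C := le_max_right _ _
  have hint : Integrable X P := by
    refine (integrable_const C).mono' hX.aestronglyMeasurable (ae_of_all _ fun ω => ?_)
    simpa using habs ω
  have hab' : a ≤ b := le_trans (hab (Classical.arbitrary Ω)).1 (hab (Classical.arbitrary Ω)).2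
  have ha0 : a ≤ 0 := by
    have : ∫ _ω, a ∂P ≤ ∫ ω, X ω ∂P :=
      integral_mono (integrable_const a) hint fun ω => (hab ω).1
    simpa [hmean] using this
  have hb0 : 0 ≤ b := by
    have : ∫ ω, X ω ∂P ≤ ∫ _ω, b ∂P :=
      integral_mono hint (integrable_const b) fun ω => (hab ω).2
    simpa [hmean] using this
  rcases eq_or_lt_of_le hab' with heq | hlt
  · -- a = b, so a = b = 0 and X = 0
    have ha : a = 0 := le_antisymm ha0 (heq ▸ hb0)
    have hb : b = 0 := heq ▸ ha
    have hXz : ∀ ω, X ω = 0 := fun ω =>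
      le_antisymm (by rw [← hb]; exact (hab ω).2) (by rw [← ha]; exact (hab ω).1)
    have : mgf X P t = 1 := by
      unfold mgf
      simp only [hXz]
      simp
    rw [this]
    exact Real.one_le_exp (by positivity)
  -- main case a < b
  have hba : 0 < b - a := by linarith
  set p := -a / (b - a) with hp_def
  have hp0 : 0 ≤ p := div_nonneg (by linarith) hba.le
  have hp1 : p ≤ 1 := by
    rw [hp_def, div_le_one hba]; linarith
  set c1 := (Real.exp (t * b) - Real.exp (t * a)) / (b - a) with hc1_def
  set c0 := (b * Real.exp (t * a) - a * Real.exp (t * b)) / (b - a) with hc0_def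
  have hpt : ∀ ω, Real.exp (t * X ω) ≤ c1 * X ω + c0 := by
    intro ω
    rcases hab ω with ⟨h1, h2⟩
    set x := X ω
    have hl0 : 0 ≤ (b - x) / (b - a) := div_nonneg (by linarith) hba.le
    have hl0p : 0 ≤ (x - a) / (b - a) := div_nonneg (by linarith) hba.le
    have hls : (b - x) / (b - a) + (x - a) / (b - a) = 1 := by
      field_simp
      ring
    have hconv := convexOn_exp.2 (Set.mem_univ (t * a)) (Set.mem_univ (t * b))
      hl0 hl0p hls
    have harg : (b - x) / (b - a) * (t * a) + (x - a) / (b - a) * (t * b) = t * x := by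
      field_simp
      ring
    simp only [smul_eq_mul] at hconv
    rw [harg] at hconv
    calc Real.exp (t * x) ≤ (b - x) / (b - a) * Real.exp (t * a)
          + (x - a) / (b - a) * Real.exp (t * b) := hconv
      _ = c1 * x + c0 := by
          rw [hc1_def, hc0_def]
          field_simp
          ring
  have hintexp : Integrable (fun ω => Real.exp (t * X ω)) P := by
    refine (integrable_const (Real.exp (|t| * C))).mono'
      ((hX.const_mul t).exp).aestronglyMeasurable (ae_of_all _ fun ω => ?_)
    rw [Real.norm_eq_abs, abs_of_pos (Real.exp_pos _), Real.exp_le_exp]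
    calc t * X ω ≤ |t * X ω| := le_abs_self _
      _ = |t| * |X ω| := abs_mul _ _
      _ ≤ |t| * C := by
          have hC0 : 0 ≤ C := (abs_nonneg _).trans (habs (Classical.arbitrary Ω))
          exact mul_le_mul_of_nonneg_left (habs ω) (abs_nonneg t)
  have hmgf_le : mgf X P t ≤ c0 := by
    have h1 : mgf X P t ≤ ∫ ω, (c1 * X ω + c0) ∂P := by
      refine integral_mono hintexp ?_ hpt
      exact (hint.const_mul c1).add (integrable_const c0)
    have h2 : ∫ ω, (c1 * X ω + c0) ∂P = c0 := by
      rw [integral_add (hint.const_mul c1) (integrable_const c0), integral_const_mul,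
        hmean, integral_const]
      simp
    rw [h2] at h1
    exact h1
  -- rewrite c0 in hoeffding_aux form
  set h := t * (b - a) with hh_def
  have hta : t * a = -p * h := by rw [hp_def, hh_def]; field_simp
  have htb : t * b = (1 - p) * h := by rw [hp_def, hh_def]; field_simp; ring
  have hc0eq : c0 = (1 - p) * Real.exp (-p * h) + p * Real.exp ((1 - p) * h) := by
    rw [hc0_def, hta, htb, hp_def]
    field_simp
    ring
  have haux := hoeffding_aux hp0 hp1 h
  rw [← hc0eq] at haux
  have hfin : h ^ 2 / 8 = t ^ 2 * (b - a) ^ 2 / 8 := by rw [hh_def]; ring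
  rw [hfin] at haux
  exact hmgf_le.trans haux

/-- Hoeffding's inequality for sums of independent bounded mean-zero random variables. -/
lemma hoeffding_sum {Ω : Type*} [MeasurableSpace Ω] (P : Measure Ω) [IsProbabilityMeasure P]
    {n : ℕ} {X : Fin n → Ω → ℝ}
    (hind : iIndepFun X P) (hX : ∀ l, Measurable (X l))
    {a b : Fin n → ℝ} (hab : ∀ l ω, X l ω ∈ Set.Icc (a l) (b l))
    (hm : ∀ l, ∫ ω, X l ω ∂P = 0) {c S : ℝ} (hc : 0 < c) (hS : 0 < S)
    (hSle : ∑ l, (b l - a l) ^ 2 ≤ S) :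
    (P {ω | c ≤ ∑ l, X l ω}).toReal ≤ Real.exp (-(2 * c ^ 2 / S)) := by
  set t := 4 * c / S with ht_def
  have ht : 0 ≤ t := by positivity
  have hint_l : ∀ l, Integrable (fun ω => Real.exp (t * X l ω)) P := by
    intro l
    set C := max |a l| |b l| with hC_def
    have habs : ∀ ω, |X l ω| ≤ C := fun ω => by
      rcases hab l ω with ⟨h1, h2⟩
      rw [abs_le]
      refine ⟨le_trans (by simp [hC_def]) (le_trans (neg_abs_le (a l)) h1), h2.trans
        (le_trans (le_abs_self (b l)) (le_max_right _ _))⟩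
    refine (integrable_const (Real.exp (|t| * C))).mono'
      (((hX l).const_mul t).exp).aestronglyMeasurable (ae_of_all _ fun ω => ?_)
    rw [Real.norm_eq_abs, abs_of_pos (Real.exp_pos _), Real.exp_le_exp]
    calc t * X l ω ≤ |t * X l ω| := le_abs_self _
      _ = |t| * |X l ω| := abs_mul _ _
      _ ≤ |t| * C := mul_le_mul_of_nonneg_left (habs ω) (abs_nonneg t)
  have hint : Integrable (fun ω => Real.exp (t * (∑ l, X l) ω)) P :=
    hind.integrable_exp_mul_sum hX fun l _ => hint_l l
  have hch := measure_ge_le_exp_mul_mgf (X := ∑ l, X l) (μ := P) c ht hint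
  have hset : {ω | c ≤ (∑ l, X l) ω} = {ω | c ≤ ∑ l, X l ω} := by
    ext ω; simp [Finset.sum_apply]
  rw [hset] at hch
  have hmgf : mgf (∑ l, X l) P t = ∏ l, mgf (X l) P t := hind.mgf_sum hX Finset.univ
  have hprod : ∏ l, mgf (X l) P t ≤ ∏ l, Real.exp (t ^ 2 * (b l - a l) ^ 2 / 8) := by
    refine Finset.prod_le_prod (fun l _ => mgf_nonneg) (fun l _ => ?_)
    exact hoeffding_mgf P (hX l) (hab l) (hm l) t
  have hprodexp : ∏ l, Real.exp (t ^ 2 * (b l - a l) ^ 2 / 8)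
      = Real.exp (∑ l, t ^ 2 * (b l - a l) ^ 2 / 8) := by
    rw [Real.exp_sum]
  have hsum_le : ∑ l, t ^ 2 * (b l - a l) ^ 2 / 8 ≤ t ^ 2 * S / 8 := by
    have : ∑ l, t ^ 2 * (b l - a l) ^ 2 / 8 = t ^ 2 / 8 * ∑ l, (b l - a l) ^ 2 := by
      rw [Finset.mul_sum]; congr 1; ext l; ring
    rw [this]
    calc t ^ 2 / 8 * ∑ l, (b l - a l) ^ 2 ≤ t ^ 2 / 8 * S :=
          mul_le_mul_of_nonneg_left hSle (by positivity)
      _ = t ^ 2 * S / 8 := by ring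
  calc (P {ω | c ≤ ∑ l, X l ω}).toReal
      ≤ Real.exp (-t * c) * mgf (∑ l, X l) P t := hch
    _ ≤ Real.exp (-t * c) * Real.exp (t ^ 2 * S / 8) := by
        refine mul_le_mul_of_nonneg_left ?_ (Real.exp_pos _).le
        rw [hmgf]
        refine hprod.trans ?_
        rw [hprodexp]
        exact Real.exp_le_exp.mpr hsum_le
    _ = Real.exp (-t * c + t ^ 2 * S / 8) := (Real.exp_add _ _).symm
    _ = Real.exp (-(2 * c ^ 2 / S)) := by
        congr 1
        rw [ht_def]
        field_simp
        ring

/-- If the random vectors `x i` are jointly independent and each has jointly independent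
components, then the "columns" `(fun ω i => x i ω l)` over `l` are jointly independent. -/
lemma cols_iIndepFun {Ω : Type*} [MeasurableSpace Ω] {P : Measure Ω} [IsProbabilityMeasure P]
    {N n : ℕ} {x : Fin N → Ω → (Fin n → ℝ)} (hmeas : ∀ i, Measurable (x i))
    (hindep : iIndepFun x P)
    (hcomp : ∀ i, iIndepFun (fun l ω => x i ω l) P) :
    iIndepFun (fun (l : Fin n) ω (i : Fin N) => x i ω l) P := by
  classical
  set C : Fin n → Ω → (Fin N → ℝ) := fun l ω i => x i ω l with hC_def
  have hCmeas : ∀ l, Measurable (C l) := fun l =>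
    measurable_pi_lambda _ fun i => (measurable_pi_apply l).comp (hmeas i)
  rw [iIndepFun_iff_iIndep]
  set pis : Fin n → Set (Set Ω) := fun l =>
    (fun A : Fin N → Set ℝ => ⋂ i, (fun ω => x i ω l) ⁻¹' (A i)) ''
      {A | ∀ i, MeasurableSet (A i)} with hpis_def
  refine iIndepSets.iIndep (fun l => (hCmeas l).comap_le) pis ?_ ?_ ?_
  · -- IsPiSystem
    rintro l s ⟨A, hA, rfl⟩ t ⟨B, hB, rfl⟩ -
    refine ⟨fun i => A i ∩ B i, fun i => (hA i).inter (hB i), ?_⟩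
    ext ω
    simp only [Set.mem_iInter, Set.mem_preimage, Set.mem_inter_iff]
    aesop
  · -- generateFrom
    intro l
    have hpi : (MeasurableSpace.pi : MeasurableSpace (Fin N → ℝ)) = MeasurableSpace.generateFrom
        (Set.pi Set.univ '' Set.pi Set.univ fun _ : Fin N => {s : Set ℝ | MeasurableSet s}) :=
      generateFrom_pi.symm
    rw [hpi, MeasurableSpace.comap_generateFrom]
    congr 1
    ext u
    constructor
    · rintro ⟨v, ⟨A, hA, rfl⟩, rfl⟩
      refine ⟨A, fun i => hA i (Set.mem_univ i), ?_⟩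
      ext ω
      simp [hC_def, Set.mem_pi]
    · rintro ⟨A, hA, rfl⟩
      refine ⟨Set.pi Set.univ A, ⟨A, fun i _ => hA i, rfl⟩, ?_⟩
      ext ω
      simp [hC_def, Set.mem_pi]
  · -- iIndepSets
    rw [iIndepSets_iff]
    intro S s hs
    have key : ∀ l ∈ S, ∃ A : Fin N → Set ℝ,
        (∀ i, MeasurableSet (A i)) ∧ s l = ⋂ i, (fun ω => x i ω l) ⁻¹' (A i) := by
      intro l hl
      obtain ⟨A, hA, hAl⟩ := hs l hl
      exact ⟨A, hA, hAl.symm⟩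
    set A : Fin n → Fin N → Set ℝ := fun l =>
      if hl : l ∈ S then (key l hl).choose else fun _ => Set.univ with hA_def
    have hAmeas : ∀ l i, MeasurableSet (A l i) := by
      intro l i
      by_cases hl : l ∈ S
      · simp only [hA_def, dif_pos hl]; exact (key l hl).choose_spec.1 i
      · simp only [hA_def, dif_neg hl]; exact MeasurableSet.univ
    have hsA : ∀ l ∈ S, s l = ⋂ i, (fun ω => x i ω l) ⁻¹' (A l i) := by
      intro l hl
      simp only [hA_def, dif_pos hl]
      exact (key l hl).choose_spec.2
    -- rewrite the intersection
    have hswap : (⋂ l ∈ S, s l) = ⋂ i, x i ⁻¹' (⋂ l ∈ S, (fun v => v l) ⁻¹' (A l i)) := by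
      ext ω
      simp only [Set.mem_iInter, Set.mem_preimage]
      constructor
      · intro h i l hl
        have := h l hl
        rw [hsA l hl] at this
        simp only [Set.mem_iInter, Set.mem_preimage] at this
        exact this i
      · intro h l hl
        rw [hsA l hl]
        simp only [Set.mem_iInter, Set.mem_preimage]
        exact fun i => h i l hl
    have hBmeas : ∀ i, MeasurableSet (⋂ l ∈ S, (fun v : Fin n → ℝ => v l) ⁻¹' (A l i)) :=
      fun i => MeasurableSet.biInter (Set.to_countable _)
        (fun l _ => (measurable_pi_apply l) (hAmeas l i))
    rw [hswap]
    rw [hindep.meas_iInter (fun i => ⟨_, hBmeas i, rfl⟩)]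
    -- each factor
    have hfac : ∀ i, P (x i ⁻¹' (⋂ l ∈ S, (fun v => v l) ⁻¹' (A l i)))
        = ∏ l ∈ S, P ((fun ω => x i ω l) ⁻¹' (A l i)) := by
      intro i
      have hpre : x i ⁻¹' (⋂ l ∈ S, (fun v => v l) ⁻¹' (A l i))
          = ⋂ l ∈ S, (fun ω => x i ω l) ⁻¹' (A l i) := by
        ext ω; simp [Set.mem_iInter, Set.mem_preimage]
      rw [hpre]
      exact (hcomp i).meas_biInter (fun l _ => ⟨A l i, hAmeas l i, rfl⟩)
    simp_rw [hfac]
    rw [Finset.prod_comm]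
    refine Finset.prod_congr rfl fun l hl => ?_
    rw [hsA l hl]
    exact (hindep.meas_iInter
      (fun i => ⟨(fun v : Fin n → ℝ => v l) ⁻¹' (A l i),
        measurable_pi_apply l (hAmeas l i), rfl⟩)).symm

section helpers
variable {Ω : Type*} [MeasurableSpace Ω] (P : Measure Ω) [IsProbabilityMeasure P]

lemma integrable_of_abs_bound {f : Ω → ℝ} (hf : Measurable f) (C : ℝ)
    (h : ∀ ω, |f ω| ≤ C) : Integrable f P :=
  (integrable_const C).mono' hf.aestronglyMeasurable (ae_of_all _ fun ω => by simpa using h ω)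

end helpers

set_option maxHeartbeats 800000 in
/-- k-element stochastic separation without a correlation assumption:
the hyperplane built on the mean of the k points `x (M+1), …, x (M+k)` separates
them from `x 1, …, x M` with the stated probability. -/
theorem k_element_separation_uncorrelated
    {Ω : Type*} [MeasurableSpace Ω] (P : Measure Ω) [IsProbabilityMeasure P]
    (n M k : ℕ) (hn : 0 < n) (hk : 1 ≤ k)
    (x : Fin (M + k) → Ω → (Fin n → ℝ))
    (hmeas : ∀ i, Measurable (x i))
    (hindep : iIndepFun x P)
    (hident : ∀ i i', Measure.map (x i) P = Measure.map (x i') P)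
    (hcompindep : ∀ i, iIndepFun (fun j ω => x i ω j) P)
    (hbound : ∀ i j ω, x i ω j ∈ Set.Icc (-1 : ℝ) 1)
    (hmean : ∀ i j, ∫ ω, x i ω j ∂P = 0)
    (σ : Fin n → ℝ) (hvar : ∀ i j, ∫ ω, (x i ω j) ^ 2 ∂P = (σ j) ^ 2)
    (R0 : ℝ) (hR0 : 0 < R0) (hR0sq : R0 ^ 2 = ∑ j, (σ j) ^ 2)
    (δ : ℝ) (hδ : 0 < δ)
    (ε : ℝ) (hε : 0 < ε) (hε1 : ε < 1) (hpos : 0 < 1 - ε - δ * (k - 1)) :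
    1 - k * Real.exp (-(2 * R0 ^ 4 * ε ^ 2 / n))
      - (k * (k - 1) / 2) * Real.exp (-(R0 ^ 4 * δ ^ 2 / (2 * n)))
      - M * Real.exp (-(R0 ^ 4 * (1 - ε - δ * (k - 1)) ^ 2 / (2 * k ^ 2 * n))) ≤
    (P {ω |
        (∀ j : Fin k,
          (1 - ε - δ * (k - 1)) / k ≤
            (∑ l, x (Fin.natAdd M j) ω l *
              ((k : ℝ)⁻¹ * ∑ i : Fin k, x (Fin.natAdd M i) ω l)) / R0 ^ 2) ∧
        ∀ i : Fin M,
          (∑ l, x (Fin.castAdd k i) ω l *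
            ((k : ℝ)⁻¹ * ∑ i' : Fin k, x (Fin.natAdd M i') ω l)) / R0 ^ 2 <
              (1 - ε - δ * (k - 1)) / k}).toReal := by
  classical
  have hR2 : (0:ℝ) < R0 ^ 2 := by positivity
  have hkR : (0:ℝ) < k := by exact_mod_cast hk
  have hnR : (0:ℝ) < n := by exact_mod_cast hn
  set θ : ℝ := 1 - ε - δ * (k - 1) with hθ_def
  set e1 := Real.exp (-(2 * R0 ^ 4 * ε ^ 2 / n)) with he1
  set e2 := Real.exp (-(R0 ^ 4 * δ ^ 2 / (2 * n))) with he2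
  set e3 := Real.exp (-(R0 ^ 4 * θ ^ 2 / (2 * k ^ 2 * n))) with he3
  -- basic measurability / bounds
  have hxlm : ∀ (i : Fin (M + k)) (l : Fin n), Measurable fun ω => x i ω l :=
    fun i l => (measurable_pi_apply l).comp (hmeas i)
  have hxb : ∀ (i : Fin (M + k)) (l : Fin n) ω, |x i ω l| ≤ 1 :=
    fun i l ω => abs_le.mpr ⟨(hbound i l ω).1, (hbound i l ω).2⟩
  have hintxl : ∀ (i : Fin (M + k)) (l : Fin n), Integrable (fun ω => x i ω l) P :=
    fun i l => integrable_of_abs_bound P (hxlm i l) 1 (hxb i l)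
  have hprod0 : ∀ (i i' : Fin (M + k)), i ≠ i' → ∀ l, ∫ ω, x i ω l * x i' ω l ∂P = 0 := by
    intro i i' hne l
    have hind : IndepFun (fun ω => x i ω l) (fun ω => x i' ω l) P :=
      (hindep.indepFun hne).comp (measurable_pi_apply l) (measurable_pi_apply l)
    have hintprod : Integrable (fun ω => x i ω l * x i' ω l) P :=
      integrable_of_abs_bound P ((hxlm i l).mul (hxlm i' l)) 1 (fun ω => by
        rw [abs_mul]
        exact mul_le_one₀ (hxb i l ω) (abs_nonneg _) (hxb i' l ω))
    have := hind.integral_fun_mul_eq_mul_integral (hintxl i l).aestronglyMeasurable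
      (hintxl i' l).aestronglyMeasurable
    simpa [hmean] using this
  have hbarb : ∀ ω l, |(k:ℝ)⁻¹ * ∑ i : Fin k, x (Fin.natAdd M i) ω l| ≤ 1 := by
    intro ω l
    rw [abs_mul, abs_of_pos (by positivity : (0:ℝ) < (k:ℝ)⁻¹)]
    calc (k:ℝ)⁻¹ * |∑ i : Fin k, x (Fin.natAdd M i) ω l|
        ≤ (k:ℝ)⁻¹ * ∑ i : Fin k, |x (Fin.natAdd M i) ω l| := by
          gcongr
          exact Finset.abs_sum_le_sum_abs _ _
      _ ≤ (k:ℝ)⁻¹ * ∑ _i : Fin k, (1:ℝ) := by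
          gcongr with i
          exact hxb _ l ω
      _ = 1 := by
          simp [Finset.sum_const]
          exact inv_mul_cancel₀ hkR.ne'
  -- bad events
  set BadA : Fin k → Set Ω := fun j =>
    {ω | ε * R0 ^ 2 ≤ ∑ l, ((σ l) ^ 2 - (x (Fin.natAdd M j) ω l) ^ 2)} with hBadA
  set BadB : Fin k → Fin k → Set Ω := fun i j =>
    {ω | δ * R0 ^ 2 ≤ ∑ l, -(x (Fin.natAdd M i) ω l * x (Fin.natAdd M j) ω l)} with hBadB
  set BadC : Fin M → Set Ω := fun i =>
    {ω | θ * R0 ^ 2 / k ≤ ∑ l, x (Fin.castAdd k i) ω l *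
      ((k:ℝ)⁻¹ * ∑ j : Fin k, x (Fin.natAdd M j) ω l)} with hBadC
  have hcols := cols_iIndepFun hmeas hindep hcompindep
  -- Hoeffding bounds on the bad events
  have hA : ∀ j : Fin k, (P (BadA j)).toReal ≤ e1 := by
    intro j
    have hiA : iIndepFun
        (fun (l : Fin n) ω => (σ l) ^ 2 - (x (Fin.natAdd M j) ω l) ^ 2) P := by
      have := (hcompindep (Fin.natAdd M j)).comp
        (fun l (v : ℝ) => (σ l) ^ 2 - v ^ 2)
        (fun l => (measurable_id.pow_const 2).const_sub ((σ l) ^ 2))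
      exact this
    have hbnd : ∀ (l : Fin n) ω, ((σ l) ^ 2 - (x (Fin.natAdd M j) ω l) ^ 2)
        ∈ Set.Icc ((σ l) ^ 2 - 1) ((σ l) ^ 2) := by
      intro l ω
      have h1 := abs_le.mp (hxb (Fin.natAdd M j) l ω)
      constructor
      · nlinarith [h1.1, h1.2]
      · nlinarith [sq_nonneg (x (Fin.natAdd M j) ω l)]
    have hintsq : ∀ l : Fin n, Integrable (fun ω => (x (Fin.natAdd M j) ω l) ^ 2) P := by
      intro l
      refine integrable_of_abs_bound P ((hxlm _ l).pow_const 2) 1 (fun ω => ?_)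
      rw [abs_pow]
      exact pow_le_one₀ (abs_nonneg _) (hxb _ l ω)
    have hmean' : ∀ l : Fin n, ∫ ω, ((σ l) ^ 2 - (x (Fin.natAdd M j) ω l) ^ 2) ∂P = 0 := by
      intro l
      rw [integral_sub (integrable_const _) (hintsq l), integral_const, hvar]
      simp
    have happ := hoeffding_sum P hiA
      (fun l => (measurable_const.sub ((hxlm _ l).pow_const 2)))
      hbnd hmean' (c := ε * R0 ^ 2) (S := (n : ℝ)) (by positivity) hnR
      (le_of_eq (by simp))
    have hfin : Real.exp (-(2 * (ε * R0 ^ 2) ^ 2 / (n : ℝ))) = e1 := by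
      rw [he1]; congr 1; ring
    rw [hBadA]
    exact happ.trans (le_of_eq hfin)
  have hB : ∀ i j : Fin k, i ≠ j → (P (BadB i j)).toReal ≤ e2 := by
    intro i j hij
    have hne : Fin.natAdd M i ≠ Fin.natAdd M j := by
      intro hcontra
      apply hij
      have := congrArg Fin.val hcontra
      simp only [Fin.coe_natAdd] at this
      exact Fin.ext (by omega)
    have hiB : iIndepFun
        (fun (l : Fin n) ω => -(x (Fin.natAdd M i) ω l * x (Fin.natAdd M j) ω l)) P := by
      have := hcols.comp
        (fun _l (v : Fin (M + k) → ℝ) => -(v (Fin.natAdd M i) * v (Fin.natAdd M j)))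
        (fun _l => ((measurable_pi_apply (Fin.natAdd M i)).mul
          (measurable_pi_apply (Fin.natAdd M j))).neg)
      exact this
    have hbnd : ∀ (l : Fin n) ω,
        -(x (Fin.natAdd M i) ω l * x (Fin.natAdd M j) ω l) ∈ Set.Icc (-1 : ℝ) 1 := by
      intro l ω
      have h1 : |-(x (Fin.natAdd M i) ω l * x (Fin.natAdd M j) ω l)| ≤ 1 := by
        rw [abs_neg, abs_mul]
        exact mul_le_one₀ (hxb _ l ω) (abs_nonneg _) (hxb _ l ω)
      exact abs_le.mp h1
    have hmean' : ∀ l : Fin n,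
        ∫ ω, -(x (Fin.natAdd M i) ω l * x (Fin.natAdd M j) ω l) ∂P = 0 := by
      intro l
      rw [integral_neg, hprod0 _ _ hne l, neg_zero]
    have happ := hoeffding_sum P hiB
      (fun l => ((hxlm _ l).mul (hxlm _ l)).neg)
      hbnd hmean' (c := δ * R0 ^ 2) (S := 4 * (n : ℝ)) (by positivity) (by positivity)
      (le_of_eq (by norm_num [mul_comm]))
    have hfin : Real.exp (-(2 * (δ * R0 ^ 2) ^ 2 / (4 * (n : ℝ)))) = e2 := by
      rw [he2]; congr 1
      have hq : 2 * (δ * R0 ^ 2) ^ 2 / (4 * (n : ℝ)) = R0 ^ 4 * δ ^ 2 / (2 * (n : ℝ)) := by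
        rw [div_eq_div_iff (by positivity) (by positivity)]
        ring
      rw [hq]
    rw [hBadB]
    exact happ.trans (le_of_eq hfin)
  have hC : ∀ i : Fin M, (P (BadC i)).toReal ≤ e3 := by
    intro i
    have hne' : ∀ j : Fin k, Fin.castAdd k i ≠ Fin.natAdd M j := by
      intro j hcontra
      have := congrArg Fin.val hcontra
      simp only [Fin.coe_castAdd, Fin.coe_natAdd] at this
      have hi := i.isLt
      omega
    have hiC : iIndepFun
        (fun (l : Fin n) ω => x (Fin.castAdd k i) ω l *
          ((k : ℝ)⁻¹ * ∑ j : Fin k, x (Fin.natAdd M j) ω l)) P := by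
      have := hcols.comp
        (fun _l (v : Fin (M + k) → ℝ) => v (Fin.castAdd k i) *
          ((k : ℝ)⁻¹ * ∑ j : Fin k, v (Fin.natAdd M j)))
        (fun _l => (measurable_pi_apply _).mul (measurable_const.mul
          (Finset.measurable_sum _ (fun j _ => measurable_pi_apply _))))
      exact this
    have hbnd : ∀ (l : Fin n) ω,
        x (Fin.castAdd k i) ω l * ((k : ℝ)⁻¹ * ∑ j : Fin k, x (Fin.natAdd M j) ω l)
          ∈ Set.Icc (-1 : ℝ) 1 := by
      intro l ω
      have h1 : |x (Fin.castAdd k i) ω l * ((k : ℝ)⁻¹ * ∑ j : Fin k, x (Fin.natAdd M j) ω l)|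
          ≤ 1 := by
        rw [abs_mul]
        exact mul_le_one₀ (hxb _ l ω) (abs_nonneg _) (hbarb ω l)
      exact abs_le.mp h1
    have hintp : ∀ (j : Fin k) (l : Fin n),
        Integrable (fun ω => x (Fin.castAdd k i) ω l * x (Fin.natAdd M j) ω l) P := by
      intro j l
      refine integrable_of_abs_bound P ((hxlm _ l).mul (hxlm _ l)) 1 (fun ω => ?_)
      rw [abs_mul]
      exact mul_le_one₀ (hxb _ l ω) (abs_nonneg _) (hxb _ l ω)
    have hmean' : ∀ l : Fin n, ∫ ω, x (Fin.castAdd k i) ω l *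
        ((k : ℝ)⁻¹ * ∑ j : Fin k, x (Fin.natAdd M j) ω l) ∂P = 0 := by
      intro l
      have hrw : (fun ω => x (Fin.castAdd k i) ω l *
          ((k : ℝ)⁻¹ * ∑ j : Fin k, x (Fin.natAdd M j) ω l))
          = fun ω => ∑ j : Fin k,
            (k : ℝ)⁻¹ * (x (Fin.castAdd k i) ω l * x (Fin.natAdd M j) ω l) := by
        funext ω
        rw [Finset.mul_sum, Finset.mul_sum]
        exact Finset.sum_congr rfl fun j _ => by ring
      rw [hrw, integral_finset_sum _ (fun j _ => (hintp j l).const_mul _)]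
      refine Finset.sum_eq_zero fun j _ => ?_
      rw [integral_const_mul, hprod0 _ _ (hne' j) l, mul_zero]
    have happ := hoeffding_sum P hiC
      (fun l => (hxlm _ l).mul (measurable_const.mul
        (Finset.measurable_sum _ (fun j _ => hxlm _ l))))
      hbnd hmean' (c := θ * R0 ^ 2 / k) (S := 4 * (n : ℝ))
      (by positivity) (by positivity) (le_of_eq (by norm_num [mul_comm]))
    have hfin : Real.exp (-(2 * (θ * R0 ^ 2 / k) ^ 2 / (4 * (n : ℝ)))) = e3 := by
      rw [he3]; congr 1
      have hq : 2 * (θ * R0 ^ 2 / k) ^ 2 / (4 * (n : ℝ))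
          = R0 ^ 4 * θ ^ 2 / (2 * (k : ℝ) ^ 2 * (n : ℝ)) := by
        have hk0 : (k : ℝ) ≠ 0 := hkR.ne'
        have hn0 : (n : ℝ) ≠ 0 := hnR.ne'
        field_simp
        ring
      rw [hq]
    rw [hBadC]
    exact happ.trans (le_of_eq hfin)
  -- the good event
  set EV : Set Ω := {ω |
      (∀ j : Fin k, θ / k ≤
          (∑ l, x (Fin.natAdd M j) ω l *
            ((k : ℝ)⁻¹ * ∑ i : Fin k, x (Fin.natAdd M i) ω l)) / R0 ^ 2) ∧
      ∀ i : Fin M,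
        (∑ l, x (Fin.castAdd k i) ω l *
          ((k : ℝ)⁻¹ * ∑ i' : Fin k, x (Fin.natAdd M i') ω l)) / R0 ^ 2 < θ / k} with hEV_def
  have hEVmeas : MeasurableSet EV := by
    have hFm : ∀ j : Fin k, Measurable fun ω =>
        (∑ l, x (Fin.natAdd M j) ω l *
          ((k : ℝ)⁻¹ * ∑ i : Fin k, x (Fin.natAdd M i) ω l)) / R0 ^ 2 := fun j =>
      (Finset.measurable_sum _ fun l _ => (hxlm _ l).mul (measurable_const.mul
        (Finset.measurable_sum _ fun i _ => hxlm _ l))).div_const _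
    have hGm : ∀ i : Fin M, Measurable fun ω =>
        (∑ l, x (Fin.castAdd k i) ω l *
          ((k : ℝ)⁻¹ * ∑ i' : Fin k, x (Fin.natAdd M i') ω l)) / R0 ^ 2 := fun i =>
      (Finset.measurable_sum _ fun l _ => (hxlm _ l).mul (measurable_const.mul
        (Finset.measurable_sum _ fun i' _ => hxlm _ l))).div_const _
    have hEVeq : EV = (⋂ j : Fin k, {ω | θ / k ≤
          (∑ l, x (Fin.natAdd M j) ω l *
            ((k : ℝ)⁻¹ * ∑ i : Fin k, x (Fin.natAdd M i) ω l)) / R0 ^ 2}) ∩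
        ⋂ i : Fin M, {ω |
          (∑ l, x (Fin.castAdd k i) ω l *
            ((k : ℝ)⁻¹ * ∑ i' : Fin k, x (Fin.natAdd M i') ω l)) / R0 ^ 2 < θ / k} := by
      rw [hEV_def]
      ext ω
      simp only [Set.mem_setOf_eq, Set.mem_inter_iff, Set.mem_iInter]
    rw [hEVeq]
    exact (MeasurableSet.iInter fun j => measurableSet_le measurable_const (hFm j)).inter
      (MeasurableSet.iInter fun i => measurableSet_lt (hGm i) measurable_const)
  set U1 : Set Ω := ⋃ j, BadA j with hU1_def
  set U2 : Set Ω := ⋃ p : Fin k × Fin k, ⋃ (_ : p.1 < p.2), BadB p.1 p.2 with hU2_def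
  set U3 : Set Ω := ⋃ i, BadC i with hU3_def
  have hsub : EVᶜ ⊆ U1 ∪ U2 ∪ U3 := by
    rw [Set.compl_subset_comm]
    intro ω hω
    simp only [Set.mem_compl_iff, Set.mem_union, not_or, hU1_def, hU2_def, hU3_def,
      Set.mem_iUnion, not_exists] at hω
    obtain ⟨⟨h1, h2⟩, h3⟩ := hω
    rw [hEV_def]
    refine ⟨fun j => ?_, fun i => ?_⟩
    · -- k-block inequality
      have hAj := h1 j
      rw [hBadA] at hAj
      simp only [Set.mem_setOf_eq, not_le] at hAj
      have hsplit2 : ∑ l, ((σ l) ^ 2 - (x (Fin.natAdd M j) ω l) ^ 2)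
          = R0 ^ 2 - ∑ l, (x (Fin.natAdd M j) ω l) ^ 2 := by
        rw [Finset.sum_sub_distrib, ← hR0sq]
      have hsq : (1 - ε) * R0 ^ 2 ≤ ∑ l, (x (Fin.natAdd M j) ω l) ^ 2 := by
        rw [hsplit2] at hAj
        linarith
      have hpair : ∀ i' : Fin k, i' ≠ j →
          -(δ * R0 ^ 2) ≤ ∑ l, x (Fin.natAdd M j) ω l * x (Fin.natAdd M i') ω l := by
        intro i' hij
        have hflip : ∑ l, x (Fin.natAdd M j) ω l * x (Fin.natAdd M i') ω l
            = ∑ l, x (Fin.natAdd M i') ω l * x (Fin.natAdd M j) ω l :=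
          Finset.sum_congr rfl fun l _ => mul_comm _ _
        rcases lt_or_gt_of_ne hij with hlt | hgt
        · have hb2 := h2 (i', j) hlt
          rw [hBadB] at hb2
          simp only [Set.mem_setOf_eq, not_le] at hb2
          rw [Finset.sum_neg_distrib] at hb2
          rw [hflip]
          linarith
        · have hb2 := h2 (j, i') hgt
          rw [hBadB] at hb2
          simp only [Set.mem_setOf_eq, not_le] at hb2
          rw [Finset.sum_neg_distrib] at hb2
          linarith
      have hTeq : (∑ l, x (Fin.natAdd M j) ω l *
            ((k : ℝ)⁻¹ * ∑ i' : Fin k, x (Fin.natAdd M i') ω l))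
          = (k : ℝ)⁻¹ * ∑ i' : Fin k, ∑ l,
              x (Fin.natAdd M j) ω l * x (Fin.natAdd M i') ω l := by
        simp_rw [Finset.mul_sum]
        rw [Finset.sum_comm]
        exact Finset.sum_congr rfl fun i' _ => Finset.sum_congr rfl fun l _ => by ring
      have hcard : ((Finset.univ.erase j).card : ℝ) = (k : ℝ) - 1 := by
        rw [Finset.card_erase_of_mem (Finset.mem_univ j), Finset.card_univ, Fintype.card_fin]
        rw [Nat.cast_sub hk]
        simp
      have hjj : ∑ l, x (Fin.natAdd M j) ω l * x (Fin.natAdd M j) ω l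
          = ∑ l, (x (Fin.natAdd M j) ω l) ^ 2 :=
        Finset.sum_congr rfl fun l _ => (sq _).symm
      have hrest : ((k : ℝ) - 1) * (-(δ * R0 ^ 2)) ≤
          ∑ i' ∈ Finset.univ.erase j, ∑ l,
            x (Fin.natAdd M j) ω l * x (Fin.natAdd M i') ω l := by
        have h5 := Finset.sum_le_sum (f := fun _ : Fin k => -(δ * R0 ^ 2))
          (fun i' (hi' : i' ∈ Finset.univ.erase j) => hpair i' (Finset.ne_of_mem_erase hi'))
        rw [Finset.sum_const, nsmul_eq_mul, hcard] at h5
        exact h5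
      have hsum_ge : (1 - ε) * R0 ^ 2 + ((k : ℝ) - 1) * (-(δ * R0 ^ 2)) ≤
          ∑ i' : Fin k, ∑ l, x (Fin.natAdd M j) ω l * x (Fin.natAdd M i') ω l := by
        rw [← Finset.add_sum_erase _ _ (Finset.mem_univ j), hjj]
        exact add_le_add hsq hrest
      rw [le_div_iff₀ hR2, hTeq]
      calc θ / k * R0 ^ 2
          = (k : ℝ)⁻¹ * ((1 - ε) * R0 ^ 2 + ((k : ℝ) - 1) * (-(δ * R0 ^ 2))) := by
            rw [hθ_def]
            field_simp
            ring
        _ ≤ (k : ℝ)⁻¹ * ∑ i' : Fin k, ∑ l,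
              x (Fin.natAdd M j) ω l * x (Fin.natAdd M i') ω l :=
            mul_le_mul_of_nonneg_left hsum_ge (by positivity)
    · -- M-block inequality
      have hCi := h3 i
      rw [hBadC] at hCi
      simp only [Set.mem_setOf_eq, not_le] at hCi
      rw [div_lt_iff₀ hR2]
      have heq2 : θ * R0 ^ 2 / k = θ / k * R0 ^ 2 := by ring
      linarith
  have hU1 : (P U1).toReal ≤ k * e1 := by
    have h0 : P U1 ≤ ∑ j, P (BadA j) := by
      rw [hU1_def]; exact measure_iUnion_fintype_le _ _
    calc (P U1).toReal ≤ (∑ j, P (BadA j)).toReal :=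
          ENNReal.toReal_mono (ENNReal.sum_ne_top.mpr fun a _ => measure_ne_top _ _) h0
      _ = ∑ j, (P (BadA j)).toReal := ENNReal.toReal_sum fun _ _ => measure_ne_top _ _
      _ ≤ ∑ _j : Fin k, e1 := Finset.sum_le_sum fun j _ => hA j
      _ = k * e1 := by
          rw [Finset.sum_const, Finset.card_univ, Fintype.card_fin, nsmul_eq_mul]
  have hU2 : (P U2).toReal ≤ (k * (k - 1) / 2) * e2 := by
    set s : Finset (Fin k × Fin k) :=
      Finset.univ.filter (fun p : Fin k × Fin k => p.1 < p.2) with hs_def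
    have hU2eq : U2 = ⋃ p ∈ s, BadB p.1 p.2 := by
      rw [hU2_def]
      ext ω
      simp [hs_def]
    have h0 : P U2 ≤ ∑ p ∈ s, P (BadB p.1 p.2) := by
      rw [hU2eq]; exact measure_biUnion_finset_le _ _
    have hfib : ∀ j : Fin k,
        ((Finset.univ.filter fun p : Fin k × Fin k => p.1 < p.2).filter
          fun p => p.snd = j).card = (j : ℕ) := by
      intro j
      rw [Finset.filter_filter]
      have hmap : (Finset.univ.filter fun p : Fin k × Fin k => p.1 < p.2 ∧ p.snd = j)
          = (Finset.Iio j).map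
            ⟨fun i => (i, j), fun a b hab => congrArg Prod.fst hab⟩ := by
        ext ⟨p1, p2⟩
        simp only [Finset.mem_filter, Finset.mem_univ, true_and, Finset.mem_map,
          Function.Embedding.coeFn_mk, Finset.mem_Iio, Prod.mk.injEq]
        constructor
        · rintro ⟨hlt, rfl⟩
          aesop
        · rintro ⟨a, ha, rfl, rfl⟩
          exact ⟨ha, rfl⟩
      rw [hmap, Finset.card_map, Fin.card_Iio]
    have hcardnat : s.card = ∑ i ∈ Finset.range k, i := by
      rw [hs_def, Finset.card_eq_sum_card_fiberwise
        (f := Prod.snd) (t := Finset.univ) (fun p _ => Finset.mem_univ _)]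
      rw [← Fin.sum_univ_eq_sum_range]
      exact Finset.sum_congr rfl fun j _ => hfib j
    have hgauss : (∑ i ∈ Finset.range k, i) * 2 = k * (k - 1) :=
      Finset.sum_range_id_mul_two k
    have hcardR : (s.card : ℝ) = (k : ℝ) * ((k : ℝ) - 1) / 2 := by
      have h6 : (s.card : ℝ) * 2 = (k : ℝ) * ((k : ℝ) - 1) := by
        have h7 : (s.card * 2 : ℕ) = k * (k - 1) := by rw [hcardnat]; exact hgauss
        have h8 := congrArg (fun m : ℕ => (m : ℝ)) h7
        push_cast [Nat.cast_sub hk] at h8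
        linarith
      rw [← h6]; ring
    calc (P U2).toReal ≤ (∑ p ∈ s, P (BadB p.1 p.2)).toReal :=
          ENNReal.toReal_mono (ENNReal.sum_ne_top.mpr fun a _ => measure_ne_top _ _) h0
      _ = ∑ p ∈ s, (P (BadB p.1 p.2)).toReal :=
          ENNReal.toReal_sum fun _ _ => measure_ne_top _ _
      _ ≤ ∑ _p ∈ s, e2 := Finset.sum_le_sum fun p hp => by
          rw [hs_def] at hp
          simp only [Finset.mem_filter] at hp
          exact hB p.1 p.2 (ne_of_lt hp.2)
      _ = s.card * e2 := by rw [Finset.sum_const, nsmul_eq_mul]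
      _ = (k * (k - 1) / 2) * e2 := by rw [hcardR]
  have hU3 : (P U3).toReal ≤ M * e3 := by
    have h0 : P U3 ≤ ∑ i, P (BadC i) := by
      rw [hU3_def]; exact measure_iUnion_fintype_le _ _
    calc (P U3).toReal ≤ (∑ i, P (BadC i)).toReal :=
          ENNReal.toReal_mono (ENNReal.sum_ne_top.mpr fun a _ => measure_ne_top _ _) h0
      _ = ∑ i, (P (BadC i)).toReal := ENNReal.toReal_sum fun _ _ => measure_ne_top _ _
      _ ≤ ∑ _i : Fin M, e3 := Finset.sum_le_sum fun i _ => hC i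
      _ = M * e3 := by
          rw [Finset.sum_const, Finset.card_univ, Fintype.card_fin, nsmul_eq_mul]
  have hcompl : (P EVᶜ).toReal ≤ (P U1).toReal + (P U2).toReal + (P U3).toReal := by
    have hle : P EVᶜ ≤ P U1 + P U2 + P U3 :=
      (measure_mono hsub).trans ((measure_union_le _ _).trans
        (add_le_add_left (measure_union_le _ _) _))
    calc (P EVᶜ).toReal ≤ (P U1 + P U2 + P U3).toReal := ENNReal.toReal_mono
          (ENNReal.add_ne_top.mpr ⟨ENNReal.add_ne_top.mpr ⟨measure_ne_top P U1,
            measure_ne_top P U2⟩, measure_ne_top P U3⟩) hle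
      _ = (P U1).toReal + (P U2).toReal + (P U3).toReal := by
          rw [ENNReal.toReal_add (ENNReal.add_ne_top.mpr ⟨measure_ne_top P U1,
              measure_ne_top P U2⟩) (measure_ne_top P U3),
            ENNReal.toReal_add (measure_ne_top P U1) (measure_ne_top P U2)]
  have hsplit : (P EV).toReal + (P EVᶜ).toReal = 1 := by
    have h1 : P EV + P EVᶜ = 1 := (measure_add_measure_compl hEVmeas).trans measure_univ
    have h2 := congrArg ENNReal.toReal h1
    rw [ENNReal.toReal_add (by finiteness) (by finiteness)] at h2
    simpa using h2
  linarith
end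

section
/- (Separation of a neighborhood) Let x_1,...,x_M, x_j be i.i.d. random vectors from a product distribution with components in [-1,1], mean zero, variances summing to R_0^2 > 0. Fix 0 < ε < 1 and 0 < μ < 1 - ε. Define h(x) = ⟨x/R_0, x_j/R_0⟩ - 1 + ε + μ, and Ω = {x ∈ R^n : ⟨x_j/R_0, (x_j - x)/R_0⟩ ≤ μ}. Then P(h(x) ≥ 0 for all x ∈ Ω, and h(x_i) < 0 for all i = 1,...,M) ≥ 1 - exp(-2 R_0^4 ε^2 / n) - M exp(-R_0^4 (1-ε-μ)^2 / (2n)). -/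
open MeasureTheory ProbabilityTheory Real

lemma hoeff_log_bound {p : ℝ} (hp0 : 0 ≤ p) (hp1 : p ≤ 1) (t : ℝ) :
    Real.log (1 - p + p * Real.exp t) ≤ p * t + t ^ 2 / 8 := by
  set D : ℝ → ℝ := fun s => 1 - p + p * Real.exp s with hDdef
  have hD : ∀ s, 0 < D s := by
    intro s
    rcases hp0.eq_or_lt with h | h
    · simp [hDdef, ← h]
    · have : 0 < p * Real.exp s := mul_pos h (Real.exp_pos s)
      have : (0:ℝ) ≤ 1 - p := by linarith
      simp only [hDdef]
      linarith [mul_pos h (Real.exp_pos s)]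
  set g : ℝ → ℝ := fun s => p * s + s ^ 2 / 8 - Real.log (D s) with hgdef
  set g1 : ℝ → ℝ := fun s => p + s / 4 - p * Real.exp s / D s with hg1def
  have hDd : ∀ s, HasDerivAt D (p * Real.exp s) s := by
    intro s
    simpa [hDdef] using ((Real.hasDerivAt_exp s).const_mul p).const_add (1 - p)
  have hg : ∀ s, HasDerivAt g (g1 s) s := by
    intro s
    have h1 : HasDerivAt (fun s : ℝ => p * s) p s := by
      simpa using (hasDerivAt_id s).const_mul p
    have h2 : HasDerivAt (fun s : ℝ => s ^ 2 / 8) (s / 4) s := by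
      have := (hasDerivAt_pow 2 s).div_const 8
      refine this.congr_deriv ?_
      ring
    have h3 : HasDerivAt (fun s => Real.log (D s)) (p * Real.exp s / D s) s :=
      (hDd s).log (hD s).ne'
    exact (h1.add h2).sub h3
  have hg1 : ∀ s, HasDerivAt g1 (1 / 4 - p * Real.exp s * (1 - p) / (D s) ^ 2) s := by
    intro s
    have h2 : HasDerivAt (fun s : ℝ => p + s / 4) (1 / 4) s := by
      simpa using ((hasDerivAt_id s).div_const 4).const_add p
    have h3 : HasDerivAt (fun s => p * Real.exp s / D s)
        ((p * Real.exp s * D s - p * Real.exp s * (p * Real.exp s)) / (D s) ^ 2) s :=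
      ((Real.hasDerivAt_exp s).const_mul p).div (hDd s) (hD s).ne'
    have := h2.sub h3
    refine this.congr_deriv ?_
    have hDs : D s = 1 - p + p * Real.exp s := rfl
    rw [hDs]
    ring
  have hg1nonneg : ∀ s, 0 ≤ 1 / 4 - p * Real.exp s * (1 - p) / (D s) ^ 2 := by
    intro s
    have h1 : p * Real.exp s * (1 - p) / (D s) ^ 2 ≤ 1 / 4 := by
      rw [div_le_iff₀ (pow_pos (hD s) 2)]
      have hDs : D s = 1 - p + p * Real.exp s := rfl
      nlinarith [sq_nonneg (1 - p - p * Real.exp s), Real.exp_pos s, mul_nonneg hp0 (Real.exp_pos s).le]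
    linarith
  have hmono1 : Monotone g1 := monotone_of_hasDerivAt_nonneg hg1 hg1nonneg
  have hg10 : g1 0 = 0 := by simp [hg1def, hDdef]
  have hgcont : ContinuousOn g Set.univ :=
    (continuous_iff_continuousAt.2 fun s => (hg s).differentiableAt.continuousAt).continuousOn
  have hkey : 0 ≤ g t := by
    have hg0 : g 0 = 0 := by simp [hgdef, hDdef]
    rcases le_total 0 t with h | h
    · have := monotoneOn_of_hasDerivWithinAt_nonneg (convex_Ici 0) (hgcont.mono (Set.subset_univ _))
        (f' := g1) (fun x _ => (hg x).hasDerivWithinAt)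
        (fun x hx => by
          have : (0:ℝ) ≤ x := by
            rw [interior_Ici] at hx
            exact le_of_lt hx
          have := hmono1 this
          rw [hg10] at this
          linarith) (Set.self_mem_Ici) (h) h
      linarith [hg0 ▸ this]
    · have := antitoneOn_of_hasDerivWithinAt_nonpos (convex_Iic 0) (hgcont.mono (Set.subset_univ _))
        (f' := g1) (fun x _ => (hg x).hasDerivWithinAt)
        (fun x hx => by
          have : x ≤ (0:ℝ) := by
            rw [interior_Iic] at hx
            exact le_of_lt hx
          have := hmono1 this
          rw [hg10] at this
          linarith) (h) (Set.self_mem_Iic) h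
      linarith [hg0 ▸ this]
  have : Real.log (D t) ≤ p * t + t ^ 2 / 8 := by
    simp only [hgdef] at hkey
    linarith
  exact this

lemma integrable_of_bddIcc {Ω : Type*} [MeasurableSpace Ω] (P : Measure Ω) [IsFiniteMeasure P]
    {Y : Ω → ℝ} (hY : Measurable Y) {a b : ℝ} (h : ∀ ω, Y ω ∈ Set.Icc a b) :
    Integrable Y P := by
  refine Integrable.mono' (integrable_const (max |a| |b|)) hY.aestronglyMeasurable
    (Filter.Eventually.of_forall fun ω => ?_)
  exact abs_le_max_abs_abs (h ω).1 (h ω).2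

lemma mgf_le_hoeffding {Ω : Type*} [MeasurableSpace Ω] {P : Measure Ω} [IsProbabilityMeasure P]
    {X : Ω → ℝ} (hX : Measurable X) {a b : ℝ} (hab : ∀ ω, X ω ∈ Set.Icc a b)
    (hmean : ∫ ω, X ω ∂P = 0) (t : ℝ) :
    mgf X P t ≤ Real.exp (t ^ 2 * (b - a) ^ 2 / 8) := by
  have hne : Nonempty Ω := by
    by_contra h
    have h1 : P Set.univ = 1 := measure_univ
    have : (Set.univ : Set Ω) = ∅ := by
      simp [Set.eq_empty_iff_forall_notMem]
      exact fun x => h ⟨x⟩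
    rw [this] at h1
    simp at h1
  obtain ⟨ω₀⟩ := hne
  have hle : a ≤ b := (hab ω₀).1.trans (hab ω₀).2
  have hintX : Integrable X P := integrable_of_bddIcc P hX hab
  have ha0 : a ≤ 0 := by
    have := integral_mono (integrable_const a) hintX (fun ω => (hab ω).1)
    simpa [hmean] using this
  have hb0 : 0 ≤ b := by
    have := integral_mono hintX (integrable_const b) (fun ω => (hab ω).2)
    simpa [hmean] using this
  rcases hle.eq_or_lt with heq | hlt
  · -- a = b, hence a = b = 0 and X = 0
    have ha : a = 0 := le_antisymm ha0 (heq ▸ hb0)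
    have hX0 : ∀ ω, X ω = 0 := fun ω =>
      le_antisymm (ha ▸ heq ▸ (hab ω).2) (ha ▸ (hab ω).1)
    have : mgf X P t = 1 := by
      simp [mgf, hX0]
    rw [this]
    exact Real.one_le_exp (by positivity)
  · set p : ℝ := -a / (b - a) with hpdef
    have hba : 0 < b - a := by linarith
    have hp0 : 0 ≤ p := div_nonneg (by linarith) hba.le
    have hp1 : p ≤ 1 := by
      rw [hpdef, div_le_one hba]
      linarith
    set c2 : ℝ := (Real.exp (t * b) - Real.exp (t * a)) / (b - a) with hc2def
    set c1 : ℝ := (b * Real.exp (t * a) - a * Real.exp (t * b)) / (b - a) with hc1def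
    have hpt : ∀ ω, Real.exp (t * X ω) ≤ c1 + c2 * X ω := by
      intro ω
      have h1 : (0:ℝ) ≤ (b - X ω) / (b - a) :=
        div_nonneg (by linarith [(hab ω).2]) hba.le
      have h2 : (0:ℝ) ≤ (X ω - a) / (b - a) :=
        div_nonneg (by linarith [(hab ω).1]) hba.le
      have h3 : (b - X ω) / (b - a) + (X ω - a) / (b - a) = 1 := by
        field_simp
        ring
      have := convexOn_exp.2 (Set.mem_univ (t * a)) (Set.mem_univ (t * b)) h1 h2 h3
      simp only [smul_eq_mul] at this
      have harg : (b - X ω) / (b - a) * (t * a) + (X ω - a) / (b - a) * (t * b) = t * X ω := by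
        field_simp
        ring
      rw [harg] at this
      refine this.trans (le_of_eq ?_)
      simp only [smul_eq_mul, hc1def, hc2def]
      field_simp
      ring
    have hintExp : Integrable (fun ω => Real.exp (t * X ω)) P := by
      refine integrable_of_bddIcc P (hX.const_mul t).exp
        (a := 0) (b := Real.exp (max (t * a) (t * b))) fun ω => ?_
      constructor
      · positivity
      · refine Real.exp_le_exp.2 ?_
        rcases le_total 0 t with ht | ht
        · exact le_max_of_le_right (by nlinarith [(hab ω).2])
        · exact le_max_of_le_left (by nlinarith [(hab ω).1])
    have hint2 : Integrable (fun ω => c1 + c2 * X ω) P :=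
      (integrable_const c1).add (hintX.const_mul c2)
    have hmgf : mgf X P t ≤ c1 := by
      have := integral_mono hintExp hint2 hpt
      rw [integral_add (integrable_const c1) (hintX.const_mul c2)] at this
      simpa [mgf, integral_const_mul, hmean] using this
    refine hmgf.trans ?_
    have hc1 : c1 = Real.exp (t * a) * (1 - p + p * Real.exp (t * (b - a))) := by
      rw [hc1def, hpdef]
      rw [show t * b = t * a + t * (b - a) by ring, Real.exp_add]
      field_simp
      ring
    rw [hc1]
    have hDpos : 0 < 1 - p + p * Real.exp (t * (b - a)) := by
      rcases hp0.eq_or_lt with h | h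
      · simp [← h]
      · nlinarith [Real.exp_pos (t * (b - a))]
    have hlog := hoeff_log_bound hp0 hp1 (t * (b - a))
    have := Real.exp_le_exp.2 hlog
    rw [Real.exp_log hDpos] at this
    calc Real.exp (t * a) * (1 - p + p * Real.exp (t * (b - a)))
        ≤ Real.exp (t * a) * Real.exp (p * (t * (b - a)) + (t * (b - a)) ^ 2 / 8) := by
          exact mul_le_mul_of_nonneg_left this (Real.exp_pos _).le
      _ = Real.exp (t * a + p * (t * (b - a)) + (t * (b - a)) ^ 2 / 8) := by
          rw [← Real.exp_add]; ring_nf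
      _ = Real.exp (t ^ 2 * (b - a) ^ 2 / 8) := by
          congr 1
          rw [hpdef]
          field_simp
          ring

lemma integrable_exp_of_bddIcc {Ω : Type*} [MeasurableSpace Ω] (P : Measure Ω) [IsFiniteMeasure P]
    {Y : Ω → ℝ} (hY : Measurable Y) {a b : ℝ} (h : ∀ ω, Y ω ∈ Set.Icc a b) (t : ℝ) :
    Integrable (fun ω => Real.exp (t * Y ω)) P := by
  refine integrable_of_bddIcc P (hY.const_mul t).exp
    (a := 0) (b := Real.exp (max (t * a) (t * b))) fun ω => ?_
  constructor
  · positivity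
  · refine Real.exp_le_exp.2 ?_
    rcases le_total 0 t with ht | ht
    · exact le_max_of_le_right (by nlinarith [(h ω).2])
    · exact le_max_of_le_left (by nlinarith [(h ω).1])

lemma mgf_sum_le {Ω : Type*} [MeasurableSpace Ω] {P : Measure Ω} [IsProbabilityMeasure P]
    {n : ℕ} {X : Fin n → Ω → ℝ} (hindep : iIndepFun X P)
    (hmeas : ∀ l, Measurable (X l)) {a b : Fin n → ℝ}
    (hab : ∀ l ω, X l ω ∈ Set.Icc (a l) (b l)) (hmean : ∀ l, ∫ ω, X l ω ∂P = 0) (t : ℝ) :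
    mgf (∑ l, X l) P t ≤ Real.exp (t ^ 2 * (∑ l, (b l - a l) ^ 2) / 8) := by
  rw [hindep.mgf_sum hmeas]
  calc ∏ l, mgf (X l) P t
      ≤ ∏ l, Real.exp (t ^ 2 * (b l - a l) ^ 2 / 8) :=
        Finset.prod_le_prod (fun l _ => mgf_nonneg)
          (fun l _ => mgf_le_hoeffding (hmeas l) (hab l) (hmean l) t)
    _ = Real.exp (t ^ 2 * (∑ l, (b l - a l) ^ 2) / 8) := by
        rw [← Real.exp_sum]
        congr 1
        rw [Finset.mul_sum]
        rw [← Finset.sum_div]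

lemma tail_bound {Ω : Type*} [MeasurableSpace Ω] {P : Measure Ω} [IsProbabilityMeasure P]
    {n : ℕ} {X : Fin n → Ω → ℝ} (hindep : iIndepFun X P)
    (hmeas : ∀ l, Measurable (X l)) {a b : Fin n → ℝ}
    (hab : ∀ l ω, X l ω ∈ Set.Icc (a l) (b l)) (hmean : ∀ l, ∫ ω, X l ω ∂P = 0)
    (hV : 0 < ∑ l, (b l - a l) ^ 2) {c : ℝ} (hc : 0 < c) :
    (P {ω | c ≤ ∑ l, X l ω}).toReal ≤ Real.exp (-(2 * c ^ 2 / ∑ l, (b l - a l) ^ 2)) := by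
  set V := ∑ l, (b l - a l) ^ 2 with hVdef
  set t := 4 * c / V with htdef
  have ht : 0 ≤ t := by positivity
  have hint : ∀ l ∈ Finset.univ, Integrable (fun ω => Real.exp (t * X l ω)) P :=
    fun l _ => integrable_exp_of_bddIcc P (hmeas l) (hab l) t
  have hchern := measure_ge_le_exp_mul_mgf (X := ∑ l, X l) (μ := P) c ht
    (hindep.integrable_exp_mul_sum hmeas hint)
  have hset : {ω | c ≤ (∑ l, X l) ω} = {ω | c ≤ ∑ l, X l ω} := by
    ext ω; simp [Finset.sum_apply]
  rw [hset] at hchern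
  refine hchern.trans ?_
  calc Real.exp (-t * c) * mgf (∑ l, X l) P t
      ≤ Real.exp (-t * c) * Real.exp (t ^ 2 * V / 8) := by
        exact mul_le_mul_of_nonneg_left (mgf_sum_le hindep hmeas hab hmean t) (Real.exp_pos _).le
    _ = Real.exp (-t * c + t ^ 2 * V / 8) := (Real.exp_add _ _).symm
    _ = Real.exp (-(2 * c ^ 2 / V)) := by
        congr 1
        rw [htdef]
        field_simp
        ring

lemma inner_mgf_le {Ω : Type*} [MeasurableSpace Ω] {P : Measure Ω} [IsProbabilityMeasure P]
    {n : ℕ} {Z : Ω → Fin n → ℝ}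
    (hcomp : iIndepFun (fun l ω => Z ω l) P)
    (hmeas : ∀ l, Measurable (fun ω => Z ω l))
    (hbd : ∀ l ω, Z ω l ∈ Set.Icc (-1:ℝ) 1) (hmean : ∀ l, ∫ ω, Z ω l ∂P = 0)
    (y : Fin n → ℝ) (hy : ∀ l, |y l| ≤ 1) (t : ℝ) :
    ∫ ω, Real.exp (t * ∑ l, Z ω l * y l) ∂P ≤ Real.exp (t ^ 2 * n / 2) := by
  have hX : ∀ l, Measurable (fun ω => Z ω l * y l) := fun l => (hmeas l).mul_const (y l)
  have hXindep : iIndepFun (fun l ω => Z ω l * y l) P :=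
    hcomp.comp (fun l r => r * y l) (fun l => measurable_id.mul_const (y l))
  have hXab : ∀ l ω, Z ω l * y l ∈ Set.Icc (-(|y l|)) (|y l|) := by
    intro l ω
    have h1 : |Z ω l * y l| ≤ |y l| := by
      rw [abs_mul]
      have := abs_le.2 ⟨(hbd l ω).1, (hbd l ω).2⟩
      nlinarith [abs_nonneg (y l)]
    exact ⟨neg_le_of_abs_le h1, le_of_abs_le h1⟩
  have hXmean : ∀ l, ∫ ω, Z ω l * y l ∂P = 0 := by
    intro l
    rw [integral_mul_const, hmean l, zero_mul]
  have := mgf_sum_le (a := fun l => -(|y l|)) (b := fun l => |y l|) hXindep hX hXab hXmean t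
  have hmgf : mgf (∑ l, fun ω => Z ω l * y l) P t = ∫ ω, Real.exp (t * ∑ l, Z ω l * y l) ∂P := by
    unfold mgf
    congr 1
    ext ω
    simp [Finset.sum_apply]
  rw [hmgf] at this
  refine this.trans (Real.exp_le_exp.2 ?_)
  have hsum : ∑ l, (|y l| - -(|y l|)) ^ 2 ≤ 4 * n := by
    calc ∑ l, (|y l| - -(|y l|)) ^ 2 ≤ ∑ l : Fin n, (4:ℝ) := by
          refine Finset.sum_le_sum fun l _ => ?_
          have := hy l
          have := abs_nonneg (y l)
          nlinarith
      _ = 4 * n := by simp [mul_comm]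
  nlinarith [sq_nonneg t]

lemma pair_mgf_le {Ω : Type*} [MeasurableSpace Ω] {P : Measure Ω} [IsProbabilityMeasure P]
    {n : ℕ} {U V : Ω → Fin n → ℝ} (hU : Measurable U) (hV : Measurable V)
    (hUV : IndepFun U V P)
    (hUcomp : iIndepFun (fun l ω => U ω l) P)
    (hUbd : ∀ l ω, U ω l ∈ Set.Icc (-1:ℝ) 1) (hVbd : ∀ l ω, V ω l ∈ Set.Icc (-1:ℝ) 1)
    (hUmean : ∀ l, ∫ ω, U ω l ∂P = 0) (t : ℝ) :
    ∫ ω, Real.exp (t * ∑ l, U ω l * V ω l) ∂P ≤ Real.exp (t ^ 2 * n / 2) := by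
  haveI : IsProbabilityMeasure (P.map U) := Measure.isProbabilityMeasure_map hU.aemeasurable
  haveI : IsProbabilityMeasure (P.map V) := Measure.isProbabilityMeasure_map hV.aemeasurable
  set F : (Fin n → ℝ) × (Fin n → ℝ) → ℝ := fun z => Real.exp (t * ∑ l, z.1 l * z.2 l) with hFdef
  have hF : Measurable F := by
    apply Measurable.exp
    apply Measurable.const_mul
    exact Finset.measurable_sum _ fun l _ =>
      ((measurable_pi_apply l).comp measurable_fst).mul ((measurable_pi_apply l).comp measurable_snd)
  set S : Set (Fin n → ℝ) := Set.pi Set.univ (fun _ => Set.Icc (-1:ℝ) 1) with hSdef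
  have hS : MeasurableSet S := MeasurableSet.pi Set.countable_univ fun l _ => measurableSet_Icc
  have hUS : ∀ ω, U ω ∈ S := fun ω l _ => hUbd l ω
  have hVS : ∀ ω, V ω ∈ S := fun ω l _ => hVbd l ω
  have hUS_ae : ∀ᵐ y ∂(P.map U), y ∈ S :=
    (ae_map_iff hU.aemeasurable hS).2 (Filter.Eventually.of_forall hUS)
  have hVS_ae : ∀ᵐ y ∂(P.map V), y ∈ S :=
    (ae_map_iff hV.aemeasurable hS).2 (Filter.Eventually.of_forall hVS)
  have hprod : P.map (fun ω => (U ω, V ω)) = (P.map U).prod (P.map V) :=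
    (indepFun_iff_map_prod_eq_prod_map_map hU.aemeasurable hV.aemeasurable).1 hUV
  have hstep1 : ∫ ω, Real.exp (t * ∑ l, U ω l * V ω l) ∂P
      = ∫ z, F z ∂((P.map U).prod (P.map V)) := by
    rw [← hprod, integral_map (hU.prodMk hV).aemeasurable hF.aestronglyMeasurable]
  -- a.e. bound on the product
  have hmapU0 : (P.map U) Sᶜ = 0 := by
    rw [Measure.map_apply hU hS.compl]
    have : U ⁻¹' Sᶜ = ∅ := by
      ext ω; simp only [Set.mem_preimage, Set.mem_compl_iff, Set.mem_empty_iff_false, iff_false,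
        not_not]
      exact hUS ω
    rw [this, measure_empty]
  have hmapV0 : (P.map V) Sᶜ = 0 := by
    rw [Measure.map_apply hV hS.compl]
    have : V ⁻¹' Sᶜ = ∅ := by
      ext ω; simp only [Set.mem_preimage, Set.mem_compl_iff, Set.mem_empty_iff_false, iff_false,
        not_not]
      exact hVS ω
    rw [this, measure_empty]
  have hae : ∀ᵐ z ∂((P.map U).prod (P.map V)), z.1 ∈ S ∧ z.2 ∈ S := by
    rw [ae_iff]
    have hsub : {z : (Fin n → ℝ) × (Fin n → ℝ) | ¬(z.1 ∈ S ∧ z.2 ∈ S)}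
        ⊆ (Sᶜ ×ˢ Set.univ) ∪ (Set.univ ×ˢ Sᶜ) := by
      intro z hz
      simp only [Set.mem_setOf_eq, not_and_or] at hz
      rcases hz with h | h
      · exact Or.inl ⟨h, Set.mem_univ _⟩
      · exact Or.inr ⟨Set.mem_univ _, h⟩
    refine measure_mono_null hsub (measure_union_null ?_ ?_)
    · rw [Measure.prod_prod, hmapU0, zero_mul]
    · rw [Measure.prod_prod, hmapV0, mul_zero]
  have hbound : ∀ z : (Fin n → ℝ) × (Fin n → ℝ), z.1 ∈ S → z.2 ∈ S →
      ‖F z‖ ≤ Real.exp (|t| * n) := by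
    intro z h1 h2
    rw [Real.norm_eq_abs, abs_of_pos (Real.exp_pos _), Real.exp_le_exp]
    have hsum : |∑ l, z.1 l * z.2 l| ≤ (n : ℝ) := by
      calc |∑ l, z.1 l * z.2 l| ≤ ∑ l, |z.1 l * z.2 l| := Finset.abs_sum_le_sum_abs _ _
        _ ≤ ∑ l : Fin n, (1:ℝ) := by
            refine Finset.sum_le_sum fun l _ => ?_
            rw [abs_mul]
            have e1 := h1 l (Set.mem_univ l)
            have e2 := h2 l (Set.mem_univ l)
            simp only [Set.mem_Icc] at e1 e2
            have a1 : |z.1 l| ≤ 1 := abs_le.2 e1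
            have a2 : |z.2 l| ≤ 1 := abs_le.2 e2
            nlinarith [abs_nonneg (z.1 l), abs_nonneg (z.2 l)]
        _ = (n : ℝ) := by simp
    calc t * ∑ l, z.1 l * z.2 l ≤ |t * ∑ l, z.1 l * z.2 l| := le_abs_self _
      _ = |t| * |∑ l, z.1 l * z.2 l| := abs_mul _ _
      _ ≤ |t| * n := mul_le_mul_of_nonneg_left hsum (abs_nonneg t)
  have hFint : Integrable F ((P.map U).prod (P.map V)) := by
    refine Integrable.mono' (integrable_const (Real.exp (|t| * n))) hF.aestronglyMeasurable ?_
    exact hae.mono fun z hz => hbound z hz.1 hz.2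
  rw [hstep1, integral_prod_symm F hFint]
  have hinner : ∀ y ∈ S, ∫ u, F (u, y) ∂(P.map U) ≤ Real.exp (t ^ 2 * n / 2) := by
    intro y hy
    have : ∫ u, F (u, y) ∂(P.map U) = ∫ ω, Real.exp (t * ∑ l, U ω l * y l) ∂P := by
      rw [integral_map hU.aemeasurable]
      exact (hF.comp (measurable_id.prodMk measurable_const)).aestronglyMeasurable
    rw [this]
    exact inner_mgf_le hUcomp (fun l => (measurable_pi_apply l).comp hU) hUbd hUmean y
      (fun l => abs_le.2 (hy l (Set.mem_univ l))) t
  calc ∫ y, ∫ u, F (u, y) ∂(P.map U) ∂(P.map V)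
      ≤ ∫ _, Real.exp (t ^ 2 * n / 2) ∂(P.map V) := by
        refine integral_mono_ae (hFint.integral_prod_right) (integrable_const _) ?_
        exact hVS_ae.mono fun y hy => hinner y hy
    _ = Real.exp (t ^ 2 * n / 2) := by simp

/-- Separation of a neighborhood (Corollary, Case 2): with probability at least
`1 - exp(-2R₀⁴ε²/n) - M exp(-R₀⁴(1-ε-μ)²/(2n))`, the functional
`h(v) = ⟨v/R₀, x_j/R₀⟩ - 1 + ε + μ` is nonnegative on the half-space
`Ω = {v : ⟨x_j/R₀, (x_j - v)/R₀⟩ ≤ μ}` and negative at all sample points. -/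
theorem neighborhood_separation
    {Ω : Type*} [MeasurableSpace Ω] (P : Measure Ω) [IsProbabilityMeasure P]
    (n M : ℕ) (hn : 0 < n) (x : Fin (M + 1) → Ω → (Fin n → ℝ))
    (hmeas : ∀ i, Measurable (x i))
    (hindep : iIndepFun x P)
    (hident : ∀ i i', Measure.map (x i) P = Measure.map (x i') P)
    (hcompindep : ∀ i, iIndepFun (fun j ω => x i ω j) P)
    (hbound : ∀ i j ω, x i ω j ∈ Set.Icc (-1 : ℝ) 1)
    (hmean : ∀ i j, ∫ ω, x i ω j ∂P = 0)
    (σ : Fin n → ℝ) (hvar : ∀ i j, ∫ ω, (x i ω j) ^ 2 ∂P = (σ j) ^ 2)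
    (R0 : ℝ) (hR0 : 0 < R0) (hR0sq : R0 ^ 2 = ∑ j, (σ j) ^ 2)
    (ε μ : ℝ) (hε : 0 < ε) (hε1 : ε < 1) (hμ : 0 < μ) (hμ1 : μ < 1 - ε) :
    1 - Real.exp (-(2 * R0 ^ 4 * ε ^ 2 / n))
      - M * Real.exp (-(R0 ^ 4 * (1 - ε - μ) ^ 2 / (2 * n))) ≤
    (P {ω |
        (∀ v : Fin n → ℝ,
          (∑ l, x (Fin.last M) ω l * (x (Fin.last M) ω l - v l)) / R0 ^ 2 ≤ μ →
          0 ≤ (∑ l, v l * x (Fin.last M) ω l) / R0 ^ 2 - 1 + ε + μ) ∧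
        ∀ i : Fin M,
          (∑ l, x i.castSucc ω l * x (Fin.last M) ω l) / R0 ^ 2 - 1 + ε + μ < 0}).toReal := by
  set j := Fin.last M with hjdef
  have hR2 : (0:ℝ) < R0 ^ 2 := by positivity
  have hxm : ∀ i l, Measurable (fun ω => x i ω l) :=
    fun i l => (measurable_pi_apply l).comp (hmeas i)
  have hsqbd : ∀ i l ω, (x i ω l) ^ 2 ∈ Set.Icc (0:ℝ) 1 := by
    intro i l ω
    have := hbound i l ω
    simp only [Set.mem_Icc] at this ⊢
    constructor
    · positivity
    · nlinarith [this.1, this.2]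
  -- the bad events
  set BadA : Set Ω := {ω | ε * R0 ^ 2 ≤ ∑ l, ((σ l) ^ 2 - (x j ω l) ^ 2)} with hBadA
  set BadB : Fin M → Set Ω :=
    fun i => {ω | (1 - ε - μ) * R0 ^ 2 ≤ ∑ l, x i.castSucc ω l * x j ω l} with hBadB
  have hmeasA : MeasurableSet BadA :=
    measurableSet_le measurable_const
      (Finset.measurable_sum _ fun l _ => (measurable_const.sub ((hxm j l).pow_const 2)))
  have hmeasB : ∀ i, MeasurableSet (BadB i) := fun i =>
    measurableSet_le measurable_const
      (Finset.measurable_sum _ fun l _ => (hxm i.castSucc l).mul (hxm j l))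
  -- bound on P BadA
  have hPA : (P BadA).toReal ≤ Real.exp (-(2 * R0 ^ 4 * ε ^ 2 / n)) := by
    have hXindep : iIndepFun
        (fun l ω => (σ l) ^ 2 - (x j ω l) ^ 2) P :=
      (hcompindep j).comp (fun l r => (σ l) ^ 2 - r ^ 2)
        (fun l => measurable_const.sub (measurable_id.pow_const 2))
    have hXab : ∀ l ω, (σ l) ^ 2 - (x j ω l) ^ 2 ∈ Set.Icc ((σ l) ^ 2 - 1) ((σ l) ^ 2) := by
      intro l ω
      have := hsqbd j l ω
      simp only [Set.mem_Icc] at this ⊢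
      constructor <;> linarith [this.1, this.2]
    have hXmean : ∀ l, ∫ ω, ((σ l) ^ 2 - (x j ω l) ^ 2) ∂P = 0 := by
      intro l
      rw [integral_sub (integrable_const _)
        (integrable_of_bddIcc P ((hxm j l).pow_const 2) (hsqbd j l ·))]
      · simp [hvar j l]
    have hV : (0:ℝ) < ∑ l : Fin n, ((σ l) ^ 2 - ((σ l) ^ 2 - 1)) ^ 2 := by
      have : ∀ l : Fin n, ((σ l) ^ 2 - ((σ l) ^ 2 - 1)) ^ 2 = 1 := by intro l; ring
      rw [Finset.sum_congr rfl (fun l _ => this l)]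
      simp
      exact_mod_cast hn
    have hc : (0:ℝ) < ε * R0 ^ 2 := by positivity
    have := tail_bound (a := fun l => (σ l) ^ 2 - 1) (b := fun l => (σ l) ^ 2)
      hXindep (fun l => measurable_const.sub ((hxm j l).pow_const 2)) hXab hXmean hV hc
    refine le_trans (le_of_eq ?_) (this.trans (le_of_eq ?_))
    · rfl
    · congr 1
      have h1 : ∑ l : Fin n, ((σ l) ^ 2 - ((σ l) ^ 2 - 1)) ^ 2 = (n:ℝ) := by
        have : ∀ l : Fin n, ((σ l) ^ 2 - ((σ l) ^ 2 - 1)) ^ 2 = 1 := by intro l; ring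
        rw [Finset.sum_congr rfl (fun l _ => this l)]
        simp
      rw [h1]
      ring
  -- bound on P (BadB i)
  have hPB : ∀ i : Fin M,
      (P (BadB i)).toReal ≤ Real.exp (-(R0 ^ 4 * (1 - ε - μ) ^ 2 / (2 * n))) := by
    intro i
    set c : ℝ := (1 - ε - μ) * R0 ^ 2 with hcdef
    have hc : 0 < c := by
      have : 0 < 1 - ε - μ := by linarith
      positivity
    set t : ℝ := c / n with htdef
    have ht : 0 ≤ t := by positivity
    set S : Ω → ℝ := fun ω => ∑ l, x i.castSucc ω l * x j ω l with hSdef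
    have hSmeas : Measurable S :=
      Finset.measurable_sum _ fun l _ => (hxm i.castSucc l).mul (hxm j l)
    have hSbd : ∀ ω, S ω ∈ Set.Icc (-(n:ℝ)) (n:ℝ) := by
      intro ω
      have h1 : ∀ l : Fin n, x i.castSucc ω l * x j ω l ∈ Set.Icc (-1:ℝ) 1 := by
        intro l
        have e1 := hbound i.castSucc l ω
        have e2 := hbound j l ω
        simp only [Set.mem_Icc] at e1 e2 ⊢
        constructor <;> nlinarith [e1.1, e1.2, e2.1, e2.2]
      constructor
      · calc -(n:ℝ) = ∑ _l : Fin n, (-1:ℝ) := by simp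
          _ ≤ S ω := Finset.sum_le_sum fun l _ => (h1 l).1
      · calc S ω ≤ ∑ _l : Fin n, (1:ℝ) := Finset.sum_le_sum fun l _ => (h1 l).2
          _ = (n:ℝ) := by simp
    have hint : Integrable (fun ω => Real.exp (t * S ω)) P :=
      integrable_exp_of_bddIcc P hSmeas hSbd t
    have hchern := measure_ge_le_exp_mul_mgf (X := S) (μ := P) c ht hint
    have hUV : IndepFun (x i.castSucc) (x j) P :=
      hindep.indepFun (Fin.ne_of_lt (Fin.castSucc_lt_last i))
    have hmgf : mgf S P t ≤ Real.exp (t ^ 2 * n / 2) :=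
      pair_mgf_le (hmeas i.castSucc) (hmeas j) hUV (hcompindep i.castSucc)
        (fun l ω => hbound i.castSucc l ω) (fun l ω => hbound j l ω)
        (fun l => hmean i.castSucc l) t
    have : (P (BadB i)).toReal ≤ Real.exp (-t * c) * Real.exp (t ^ 2 * n / 2) := by
      refine hchern.trans ?_
      exact mul_le_mul_of_nonneg_left hmgf (Real.exp_pos _).le
    refine this.trans (le_of_eq ?_)
    rw [← Real.exp_add]
    congr 1
    rw [htdef, hcdef]
    have hnne : (n:ℝ) ≠ 0 := by positivity
    field_simp
    ring
  -- the good event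
  set E : Set Ω := BadAᶜ ∩ ⋂ i, (BadB i)ᶜ with hEdef
  have hmeasE : MeasurableSet E :=
    hmeasA.compl.inter (MeasurableSet.iInter fun i => (hmeasB i).compl)
  -- E is included in the target set
  have hsub : E ⊆ {ω |
      (∀ v : Fin n → ℝ,
        (∑ l, x (Fin.last M) ω l * (x (Fin.last M) ω l - v l)) / R0 ^ 2 ≤ μ →
        0 ≤ (∑ l, v l * x (Fin.last M) ω l) / R0 ^ 2 - 1 + ε + μ) ∧
      ∀ i : Fin M,
        (∑ l, x i.castSucc ω l * x (Fin.last M) ω l) / R0 ^ 2 - 1 + ε + μ < 0} := by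
    rintro ω ⟨hA', hB'⟩
    simp only [Set.mem_compl_iff, hBadA, Set.mem_setOf_eq, not_le] at hA'
    have hs2 : (1 - ε) * R0 ^ 2 < ∑ l, (x j ω l) ^ 2 := by
      have h1 : ∑ l, ((σ l) ^ 2 - (x j ω l) ^ 2)
          = R0 ^ 2 - ∑ l, (x j ω l) ^ 2 := by
        rw [Finset.sum_sub_distrib, ← hR0sq]
      rw [h1] at hA'
      linarith
    constructor
    · intro v hv
      have hv' : ∑ l, x j ω l * (x j ω l - v l) ≤ μ * R0 ^ 2 :=
        (div_le_iff₀ hR2).1 hv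
      have hexp : ∑ l, x j ω l * (x j ω l - v l)
          = (∑ l, (x j ω l) ^ 2) - ∑ l, x j ω l * v l := by
        rw [← Finset.sum_sub_distrib]
        exact Finset.sum_congr rfl fun l _ => by ring
      have hkey : (1 - ε - μ) * R0 ^ 2 ≤ ∑ l, v l * x j ω l := by
        have hcomm : ∑ l, v l * x j ω l = ∑ l, x j ω l * v l :=
          Finset.sum_congr rfl fun l _ => mul_comm _ _
        rw [hcomm]
        rw [hexp] at hv'
        linarith
      have : (1 - ε - μ) ≤ (∑ l, v l * x j ω l) / R0 ^ 2 :=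
        (le_div_iff₀ hR2).2 (by linarith)
      linarith
    · intro i
      have hB'' := hB'
      rw [Set.mem_iInter] at hB''
      have := hB'' i
      simp only [Set.mem_compl_iff, hBadB, Set.mem_setOf_eq, not_le] at this
      have : (∑ l, x i.castSucc ω l * x j ω l) / R0 ^ 2 < 1 - ε - μ :=
        (div_lt_iff₀ hR2).2 (by linarith)
      linarith
  -- measure arithmetic
  have hcompl : (P E).toReal = 1 - (P Eᶜ).toReal := by
    have h1 : P Eᶜ = 1 - P E := prob_compl_eq_one_sub hmeasE
    rw [h1, ENNReal.toReal_sub_of_le prob_le_one ENNReal.one_ne_top]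
    simp
  have hEc : (P Eᶜ).toReal ≤ (P BadA).toReal + ∑ i, (P (BadB i)).toReal := by
    have h1 : Eᶜ = BadA ∪ ⋃ i, BadB i := by
      rw [hEdef, Set.compl_inter, Set.compl_iInter]
      simp
    have h2 : P Eᶜ ≤ P BadA + ∑ i, P (BadB i) := by
      rw [h1]
      refine (measure_union_le _ _).trans ?_
      refine add_le_add le_rfl ?_
      refine (measure_iUnion_le _).trans ?_
      rw [tsum_fintype]
    have h3 : P BadA + ∑ i, P (BadB i) ≠ ⊤ := by
      refine ENNReal.add_ne_top.2 ⟨measure_ne_top _ _, ?_⟩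
      exact (ENNReal.sum_lt_top.2 fun i _ => (measure_lt_top P _)).ne
    have := ENNReal.toReal_mono h3 h2
    rwa [ENNReal.toReal_add (measure_ne_top _ _)
      ((ENNReal.sum_lt_top.2 fun i _ => (measure_lt_top P _)).ne),
      ENNReal.toReal_sum (fun i _ => measure_ne_top _ _)] at this
  have hfinal : 1 - Real.exp (-(2 * R0 ^ 4 * ε ^ 2 / n))
      - M * Real.exp (-(R0 ^ 4 * (1 - ε - μ) ^ 2 / (2 * n))) ≤ (P E).toReal := by
    rw [hcompl]
    have hsum : ∑ i : Fin M, (P (BadB i)).toReal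
        ≤ M * Real.exp (-(R0 ^ 4 * (1 - ε - μ) ^ 2 / (2 * n))) := by
      calc ∑ i : Fin M, (P (BadB i)).toReal
          ≤ ∑ _i : Fin M, Real.exp (-(R0 ^ 4 * (1 - ε - μ) ^ 2 / (2 * n))) :=
            Finset.sum_le_sum fun i _ => hPB i
        _ = M * Real.exp (-(R0 ^ 4 * (1 - ε - μ) ^ 2 / (2 * n))) := by
            simp [Finset.sum_const, mul_comm]
    have := hEc.trans (add_le_add hPA hsum)
    linarith
  refine hfinal.trans ?_
  exact ENNReal.toReal_mono (measure_ne_top _ _) (measure_mono hsub)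
end
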